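/- Let 1 < p < ∞. There exists a constant Cₚ > 0 depending only on p such that for every probability measure ν on ℝ having finite second moment and a density n ∈ Lᵖ(ℝ) with respect to Lebesgue measure, and for every z ∈ ℝ, the integral ∫_ℝ log|z − x| ν(dx) converges absolutely and | ∫_ℝ log|z − x| ν(dx) | ≤ Cₚ (1 + ‖n‖_{Lᵖ(ℝ)} + z² + ∫_ℝ x² ν(dx)). -/

import Mathlib

open MeasureTheory
open scoped ENNReal NNReal

private lemma abs_log_le_rpow_aux {ε s : ℝ} (hε : 0 < ε) (hs0 : 0 ≤ s) (hs1 : s ≤ 1) :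
    |Real.log s| ≤ ε⁻¹ * s ^ (-ε) := by
  rcases eq_or_lt_of_le hs0 with h | h
  · rw [← h, Real.log_zero, Real.zero_rpow (by simpa using hε.ne')]
    simp
  · have hlog : Real.log s ≤ 0 := Real.log_nonpos hs0 hs1
    rw [abs_of_nonpos hlog]
    have h1 : Real.log (s ^ (-ε)) = -ε * Real.log s := Real.log_rpow h _
    have h2 : Real.log (s ^ (-ε)) ≤ s ^ (-ε) := by
      have := Real.log_le_sub_one_of_pos (Real.rpow_pos_of_pos h (-ε))
      linarith
    rw [h1] at h2
    calc -Real.log s = ε⁻¹ * (-ε * Real.log s) := by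
          rw [neg_mul, mul_neg, ← mul_assoc, inv_mul_cancel₀ hε.ne', one_mul]
    _ ≤ ε⁻¹ * (s ^ (-ε)) := by
          apply mul_le_mul_of_nonneg_left h2 (by positivity)

private lemma abs_log_le_self_aux {s : ℝ} (hs : 1 ≤ s) : |Real.log s| ≤ s := by
  rw [abs_of_nonneg (Real.log_nonneg hs)]
  linarith [Real.log_le_sub_one_of_pos (show (0:ℝ) < s by linarith)]

private lemma lintegral_indicator_rpow_half_lt_top :
    ∫⁻ t, Set.indicator (Set.Icc (-1:ℝ) 1)
      (fun t => ENNReal.ofReal (|t| ^ (-(1/2) : ℝ))) t < ∞ := by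
  set F : ℝ → ℝ≥0∞ := fun t => ENNReal.ofReal (|t| ^ (-(1/2) : ℝ)) with hF
  have hFmeas : Measurable F :=
    ENNReal.measurable_ofReal.comp (measurable_id.abs.pow_const _)
  have hI : ∫⁻ t, Set.indicator (Set.Icc (0:ℝ) 1) F t < ∞ := by
    rw [lintegral_indicator measurableSet_Icc,
      ← Measure.restrict_congr_set Ioc_ae_eq_Icc]
    have hInt : IntegrableOn (fun t : ℝ => t ^ (-(1/2) : ℝ)) (Set.Ioc 0 1) volume := by
      have h := intervalIntegral.intervalIntegrable_rpow' (a := 0) (b := 1) (r := -(1/2)) (by norm_num)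
      rw [intervalIntegrable_iff, Set.uIoc_of_le zero_le_one] at h
      exact h
    have hle : ∫⁻ t in Set.Ioc (0:ℝ) 1, F t
        ≤ ∫⁻ t in Set.Ioc (0:ℝ) 1, (‖t ^ (-(1/2) : ℝ)‖₊ : ℝ≥0∞) := by
      apply setLIntegral_mono ((measurable_id.pow_const _).enorm)
      intro t ht
      rw [hF]
      simp only
      rw [abs_of_pos ht.1]
      exact Real.ofReal_le_enorm _
    exact lt_of_le_of_lt hle hInt.hasFiniteIntegral
  have hneg : ∫⁻ t, Set.indicator (Set.Icc (-1:ℝ) 0) F t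
      = ∫⁻ t, Set.indicator (Set.Icc (0:ℝ) 1) F t := by
    have hmp := (Measure.measurePreserving_neg (volume : Measure ℝ)).lintegral_comp
      (hFmeas.indicator (measurableSet_Icc (a := (-1:ℝ)) (b := 0)))
    rw [← hmp]
    apply lintegral_congr
    intro x
    by_cases hx : x ∈ Set.Icc (0:ℝ) 1
    · have hx' : -x ∈ Set.Icc (-1:ℝ) 0 := by
        rcases Set.mem_Icc.1 hx with ⟨h1, h2⟩
        exact Set.mem_Icc.2 ⟨by linarith, by linarith⟩
      rw [Set.indicator_of_mem hx', Set.indicator_of_mem hx, hF]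
      simp [abs_neg]
    · have hx' : -x ∉ Set.Icc (-1:ℝ) 0 := by
        intro h
        rcases Set.mem_Icc.1 h with ⟨h1, h2⟩
        exact hx (Set.mem_Icc.2 ⟨by linarith, by linarith⟩)
      rw [Set.indicator_of_notMem hx', Set.indicator_of_notMem hx]
  have hsplit : ∀ t, Set.indicator (Set.Icc (-1:ℝ) 1) F t
      ≤ Set.indicator (Set.Icc (-1:ℝ) 0) F t + Set.indicator (Set.Icc (0:ℝ) 1) F t := by
    intro t
    by_cases ht : t ∈ Set.Icc (-1:ℝ) 1
    · rw [Set.indicator_of_mem ht]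
      rcases le_total t 0 with h | h
      · rw [Set.indicator_of_mem (Set.mem_Icc.2 ⟨ht.1, h⟩)]
        exact le_self_add
      · rw [Set.indicator_of_mem (Set.mem_Icc.2 ⟨h, ht.2⟩)]
        exact le_add_self
    · rw [Set.indicator_of_notMem ht]
      exact zero_le
  calc ∫⁻ t, Set.indicator (Set.Icc (-1:ℝ) 1) F t
      ≤ ∫⁻ t, (Set.indicator (Set.Icc (-1:ℝ) 0) F t
          + Set.indicator (Set.Icc (0:ℝ) 1) F t) := lintegral_mono hsplit
    _ = (∫⁻ t, Set.indicator (Set.Icc (-1:ℝ) 0) F t)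
          + ∫⁻ t, Set.indicator (Set.Icc (0:ℝ) 1) F t :=
        lintegral_add_left (hFmeas.indicator measurableSet_Icc) _
    _ < ∞ := by
        rw [hneg]
        exact ENNReal.add_lt_top.2 ⟨hI, hI⟩

/-- The logarithmic potential estimate \eqref{minkowski} from the proof of Lemma
`chainrule`: for `1 < p < ∞` there is a constant `Cₚ > 0` such that for every probability
measure `ν` on `ℝ` with finite second moment and density `n ∈ Lᵖ(ℝ)`, and every `z ∈ ℝ`,
the integral `∫ log|z−x| ν(dx)` converges absolutely and is bounded by
`Cₚ (1 + ‖n‖_p + z² + ∫ x² ν(dx))`. -/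
theorem log_potential_bound (p : ℝ) (hp : 1 < p) :
    ∃ C : ℝ, 0 < C ∧
      ∀ (ν : Measure ℝ) (n : ℝ → ℝ), IsProbabilityMeasure ν →
        ν = (volume : Measure ℝ).withDensity (fun x => ENNReal.ofReal (n x)) →
        MemLp n (ENNReal.ofReal p) (volume : Measure ℝ) →
        Integrable (fun x => x ^ 2) ν →
        ∀ z : ℝ,
          Integrable (fun x => Real.log |z - x|) ν ∧
          |∫ x, Real.log |z - x| ∂ν|
            ≤ C * (1 + (eLpNorm n (ENNReal.ofReal p) volume).toReal
                + z ^ 2 + ∫ x, x ^ 2 ∂ν) := by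
  have hpq : p.HolderConjugate (p.conjExponent) := Real.HolderConjugate.conjExponent hp
  set q : ℝ := p.conjExponent with hqdef
  have hq1 : 1 < q := hpq.symm.lt
  have hq0 : (0:ℝ) < q := lt_trans one_pos hq1
  set ε : ℝ := (2 * q)⁻¹ with hεdef
  have hε0 : 0 < ε := by positivity
  have hεq : -ε * q = -(1/2 : ℝ) := by
    rw [hεdef]
    field_simp
  -- the kernel
  set kk : ℝ → ℝ≥0∞ := fun t =>
    Set.indicator (Set.Icc (-1:ℝ) 1) (fun t => ENNReal.ofReal (|t| ^ (-ε))) t with hkk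
  have hkk_meas : Measurable kk :=
    (ENNReal.measurable_ofReal.comp (measurable_id.abs.pow_const _)).indicator
      measurableSet_Icc
  have hkkq : ∀ t, kk t ^ q
      = Set.indicator (Set.Icc (-1:ℝ) 1)
          (fun t => ENNReal.ofReal (|t| ^ (-(1/2) : ℝ))) t := by
    intro t
    by_cases ht : t ∈ Set.Icc (-1:ℝ) 1
    · rw [hkk]
      simp only [Set.indicator_of_mem ht]
      rw [ENNReal.ofReal_rpow_of_nonneg (Real.rpow_nonneg (abs_nonneg t) _) hq0.le,
        ← Real.rpow_mul (abs_nonneg t), hεq]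
    · rw [hkk]
      simp only [Set.indicator_of_notMem ht]
      exact ENNReal.zero_rpow_of_pos hq0
  set J : ℝ≥0∞ := ∫⁻ t, kk t ^ q with hJdef
  have hJfin : J ≠ ∞ := by
    rw [hJdef]
    have : ∫⁻ t, kk t ^ q = ∫⁻ t, Set.indicator (Set.Icc (-1:ℝ) 1)
        (fun t => ENNReal.ofReal (|t| ^ (-(1/2) : ℝ))) t := lintegral_congr hkkq
    rw [this]
    exact lintegral_indicator_rpow_half_lt_top.ne
  set K : ℝ := (J ^ (1/q)).toReal with hKdef
  have hK0 : 0 ≤ K := ENNReal.toReal_nonneg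
  have hεK0 : (0:ℝ) ≤ ε⁻¹ * K := mul_nonneg (inv_nonneg.2 hε0.le) hK0
  refine ⟨1 + ε⁻¹ * K, by linarith, ?_⟩
  intro ν n hprob hdens hn hx2 z
  set m2 : ℝ := ∫ x, x ^ 2 ∂ν with hm2def
  have hm2 : 0 ≤ m2 := integral_nonneg fun x => sq_nonneg x
  set Ne : ℝ≥0∞ := eLpNorm n (ENNReal.ofReal p) volume with hNedef
  have hNefin : Ne ≠ ∞ := hn.2.ne
  set N : ℝ := Ne.toReal with hNdef
  have hN0 : 0 ≤ N := ENNReal.toReal_nonneg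
  have hp0 : (0:ℝ) < p := lt_trans one_pos hp
  -- the Lᵖ norm bound for the density
  have hNp : (∫⁻ x, ENNReal.ofReal (n x) ^ p) ^ (1/p) ≤ Ne := by
    rw [hNedef, eLpNorm_eq_lintegral_rpow_enorm_toReal
      (by simp only [ne_eq, ENNReal.ofReal_eq_zero, not_le]; linarith)
      ENNReal.ofReal_ne_top, ENNReal.toReal_ofReal hp0.le]
    apply ENNReal.rpow_le_rpow _ (by positivity)
    apply lintegral_mono fun x => ?_
    apply ENNReal.rpow_le_rpow _ hp0.le
    calc ENNReal.ofReal (n x) ≤ ENNReal.ofReal ‖n x‖ :=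
          ENNReal.ofReal_le_ofReal ((le_abs_self _).trans_eq (Real.norm_eq_abs _).symm)
      _ = (‖n x‖₊ : ℝ≥0∞) := ofReal_norm _
  -- pointwise bound
  have hpt : ∀ x, ENNReal.ofReal (abs (Real.log |z - x|))
      ≤ ENNReal.ofReal (1 + z ^ 2 + x ^ 2) + ENNReal.ofReal ε⁻¹ * kk (z - x) := by
    intro x
    rcases le_or_gt |z - x| 1 with h | h
    · have hmem : z - x ∈ Set.Icc (-1:ℝ) 1 := Set.mem_Icc.2 (abs_le.1 h)
      calc ENNReal.ofReal (abs (Real.log |z - x|))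
          ≤ ENNReal.ofReal (ε⁻¹ * |z - x| ^ (-ε)) :=
            ENNReal.ofReal_le_ofReal (abs_log_le_rpow_aux hε0 (abs_nonneg _) h)
        _ = ENNReal.ofReal ε⁻¹ * ENNReal.ofReal (|z - x| ^ (-ε)) :=
            ENNReal.ofReal_mul (by positivity)
        _ = ENNReal.ofReal ε⁻¹ * kk (z - x) := by
            rw [hkk]; simp only [Set.indicator_of_mem hmem]
        _ ≤ _ := le_add_self
    · have hb : abs (Real.log |z - x|) ≤ 1 + z ^ 2 + x ^ 2 := by
        have h1 : abs (Real.log |z - x|) ≤ |z - x| := abs_log_le_self_aux h.le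
        have h2 : |z - x| ≤ |z| + |x| := by
          have := norm_sub_le z x
          simpa [Real.norm_eq_abs] using this
        nlinarith [sq_abs z, sq_abs x, sq_nonneg (|z| - 1), sq_nonneg (|x| - 1),
          abs_nonneg z, abs_nonneg x]
      exact le_trans (ENNReal.ofReal_le_ofReal hb) le_self_add
  -- the first term
  have hint : Integrable (fun x => 1 + z ^ 2 + x ^ 2) ν := (integrable_const (1 + z ^ 2)).add hx2
  have hA : ∫⁻ x, ENNReal.ofReal (1 + z ^ 2 + x ^ 2) ∂ν
      = ENNReal.ofReal (1 + z ^ 2 + m2) := by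
    rw [← ofReal_integral_eq_lintegral_ofReal hint
      (Filter.Eventually.of_forall fun x => by positivity)]
    congr 1
    rw [integral_add (integrable_const _) hx2, integral_const]
    simp [measure_univ, hm2def]
  -- the kernel term
  have hkz : Measurable fun x : ℝ => kk (z - x) :=
    hkk_meas.comp (measurable_const.sub measurable_id)
  have hnae : AEMeasurable (fun x => ENNReal.ofReal (n x)) volume :=
    ENNReal.measurable_ofReal.comp_aemeasurable hn.1.aemeasurable
  have hB : ∫⁻ x, ENNReal.ofReal ε⁻¹ * kk (z - x) ∂ν
      ≤ ENNReal.ofReal ε⁻¹ * (J ^ (1/q) * Ne) := by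
    rw [lintegral_const_mul' _ _ ENNReal.ofReal_ne_top]
    apply mul_le_mul_right ?_ _
    have htrans : ∫⁻ x, kk (z - x) ^ q = J := by
      rw [hJdef]
      have := (Measure.measurePreserving_sub_left (volume : Measure ℝ) z).lintegral_comp
        (hkk_meas.pow_const q)
      simpa using this
    calc ∫⁻ x, kk (z - x) ∂ν
        = ∫⁻ x, ((fun x => ENNReal.ofReal (n x)) * fun x => kk (z - x)) x ∂volume := by
          rw [hdens, lintegral_withDensity_eq_lintegral_mul₀ hnae hkz.aemeasurable]
      _ ≤ (∫⁻ x, ENNReal.ofReal (n x) ^ p) ^ (1/p) * (∫⁻ x, kk (z - x) ^ q) ^ (1/q) :=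
          ENNReal.lintegral_mul_le_Lp_mul_Lq volume hpq hnae hkz.aemeasurable
      _ ≤ Ne * (∫⁻ x, kk (z - x) ^ q) ^ (1/q) := by gcongr
      _ = J ^ (1/q) * Ne := by rw [htrans, mul_comm]
  -- the main lintegral bound
  set R : ℝ≥0∞ := ENNReal.ofReal (1 + z ^ 2 + m2)
      + ENNReal.ofReal ε⁻¹ * (J ^ (1/q) * Ne) with hRdef
  have hL1 : ∫⁻ x, ENNReal.ofReal (abs (Real.log |z - x|)) ∂ν ≤ R := by
    calc ∫⁻ x, ENNReal.ofReal (abs (Real.log |z - x|)) ∂ν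
        ≤ ∫⁻ x, (ENNReal.ofReal (1 + z ^ 2 + x ^ 2)
            + ENNReal.ofReal ε⁻¹ * kk (z - x)) ∂ν := lintegral_mono hpt
      _ = (∫⁻ x, ENNReal.ofReal (1 + z ^ 2 + x ^ 2) ∂ν)
            + ∫⁻ x, ENNReal.ofReal ε⁻¹ * kk (z - x) ∂ν := by
          apply lintegral_add_left
          exact ENNReal.measurable_ofReal.comp (by fun_prop)
      _ ≤ R := by
          rw [hRdef, hA]
          exact add_le_add_right hB _
  have hprodfin : ENNReal.ofReal ε⁻¹ * (J ^ (1/q) * Ne) ≠ ∞ :=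
    ENNReal.mul_ne_top ENNReal.ofReal_ne_top
      (ENNReal.mul_ne_top (ENNReal.rpow_ne_top_of_nonneg (by positivity) hJfin) hNefin)
  have hRfin : R ≠ ∞ := by
    rw [hRdef]
    exact ENNReal.add_ne_top.2 ⟨ENNReal.ofReal_ne_top, hprodfin⟩
  have hmeaslog : Measurable fun x : ℝ => Real.log |z - x| :=
    Real.measurable_log.comp (measurable_const.sub measurable_id).abs
  have hInt : Integrable (fun x => Real.log |z - x|) ν := by
    refine ⟨hmeaslog.aestronglyMeasurable, ?_⟩
    rw [hasFiniteIntegral_iff_norm]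
    simp_rw [Real.norm_eq_abs]
    exact lt_of_le_of_lt hL1 hRfin.lt_top
  refine ⟨hInt, ?_⟩
  have hRto : R.toReal = (1 + z ^ 2 + m2) + ε⁻¹ * (K * N) := by
    rw [hRdef, ENNReal.toReal_add ENNReal.ofReal_ne_top hprodfin,
      ENNReal.toReal_ofReal (by nlinarith [sq_nonneg z]),
      ENNReal.toReal_mul, ENNReal.toReal_mul,
      ENNReal.toReal_ofReal (by positivity), hKdef, hNdef]
  have habs : |∫ x, Real.log |z - x| ∂ν| ≤ R.toReal := by
    calc |∫ x, Real.log |z - x| ∂ν| ≤ ∫ x, abs (Real.log |z - x|) ∂ν := by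
          have := norm_integral_le_integral_norm (μ := ν) (fun x => Real.log |z - x|)
          simpa [Real.norm_eq_abs] using this
      _ = (∫⁻ x, ENNReal.ofReal (abs (Real.log |z - x|)) ∂ν).toReal := by
          rw [integral_eq_lintegral_of_nonneg_ae
            (Filter.Eventually.of_forall fun x => abs_nonneg _)
            hmeaslog.abs.aestronglyMeasurable]
      _ ≤ R.toReal := ENNReal.toReal_mono hRfin hL1
  calc |∫ x, Real.log |z - x| ∂ν| ≤ R.toReal := habs
    _ = (1 + z ^ 2 + m2) + ε⁻¹ * (K * N) := hRto
    _ ≤ (1 + ε⁻¹ * K) * (1 + N + z ^ 2 + m2) := by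
        nlinarith [mul_nonneg hεK0 hN0, mul_nonneg hεK0 hm2,
          mul_nonneg hεK0 (sq_nonneg z), sq_nonneg z]
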